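/- arXiv:2204.11197 — 2 statements merged into one kernel-verified Lean document; each statement's English description precedes it below -/
import Mathlib

section
/- Let D_n be defined recursively by D_n(t) = t² D_{n-1}'(t) with D_0(t) = t^{ν+1} e^{x t + y/t}, and set D_{-1} = D_{-2} = 0. Then for all n ≥ 0 and t > 0: D_{n+1}(t) = (x t² + (ν+1+2n) t − y) D_n(t) + (2 n t y − n(n−1) t² − n(ν+1) t²) D_{n-1}(t) − n(n−1) t² y D_{n-2}(t). -/
open Real Set Filter

noncomputable def auxD (x y ν : ℝ) : ℕ → ℝ → ℝ
  | 0 => fun t => t ^ (ν + 1) * Real.exp (x * t + y / t)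
  | (n+1) => fun t => t ^ 2 * deriv (auxD x y ν n) t

noncomputable def auxZ (x y ν : ℝ) (n : ℤ) : ℝ → ℝ :=
  if 0 ≤ n then auxD x y ν n.toNat else 0

lemma auxZ_coe (x y ν : ℝ) (m : ℕ) : auxZ x y ν (m : ℤ) = auxD x y ν m := by
  simp [auxZ]

lemma auxZ_neg (x y ν : ℝ) {m : ℤ} (h : m < 0) : auxZ x y ν m = 0 := by
  simp [auxZ, not_le.mpr h]

lemma contAuxD (x y ν : ℝ) : ∀ n : ℕ, ContDiffOn ℝ ⊤ (auxD x y ν n) (Ioi 0)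
  | 0 => by
    intro t ht
    have ht' : (t : ℝ) ≠ 0 := ne_of_gt ht
    apply ContDiffAt.contDiffWithinAt
    exact (Real.contDiffAt_rpow_const_of_ne ht').mul
      ((Real.contDiff_exp.contDiffAt).comp t
        ((contDiffAt_const.mul contDiffAt_id).add (contDiffAt_const.div contDiffAt_id ht')))
  | (n+1) => by
    have h := (contAuxD x y ν n).deriv_of_isOpen (m := ⊤) isOpen_Ioi le_top
    exact (contDiffOn_id.pow 2).mul h

lemma diffAuxD (x y ν : ℝ) (n : ℕ) {t : ℝ} (ht : 0 < t) :
    DifferentiableAt ℝ (auxD x y ν n) t :=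
  ((contAuxD x y ν n).differentiableOn (by simp)).differentiableAt (Ioi_mem_nhds ht)

lemma diffAuxZ (x y ν : ℝ) (m : ℤ) {t : ℝ} (ht : 0 < t) :
    DifferentiableAt ℝ (auxZ x y ν m) t := by
  rcases le_or_gt 0 m with h | h
  · obtain ⟨k, rfl⟩ := Int.eq_ofNat_of_zero_le h
    rw [auxZ_coe]
    exact diffAuxD x y ν k ht
  · rw [auxZ_neg x y ν h]
    exact (differentiableAt_const 0)

lemma stepAuxZ (x y ν : ℝ) (m : ℕ) (t : ℝ) :
    auxZ x y ν ((m : ℤ) + 1) t = t ^ 2 * deriv (auxZ x y ν (m : ℤ)) t := by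
  rw [show ((m : ℤ) + 1) = ((m + 1 : ℕ) : ℤ) by push_cast; ring, auxZ_coe, auxZ_coe]
  rfl

lemma padded1 (x y ν : ℝ) (n : ℕ) (t : ℝ) :
    (n : ℝ) * (t ^ 2 * deriv (auxZ x y ν ((n : ℤ) - 1)) t) = (n : ℝ) * auxZ x y ν (n : ℤ) t := by
  cases n with
  | zero => simp
  | succ k =>
    rw [show (((k+1 : ℕ) : ℤ) - 1) = (k : ℤ) by push_cast; ring,
      show ((k+1 : ℕ) : ℤ) = (k : ℤ) + 1 by push_cast; ring, stepAuxZ]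

lemma padded2 (x y ν : ℝ) (n : ℕ) (t : ℝ) :
    (n : ℝ) * ((n : ℝ) - 1) * (t ^ 2 * deriv (auxZ x y ν ((n : ℤ) - 2)) t)
      = (n : ℝ) * ((n : ℝ) - 1) * auxZ x y ν ((n : ℤ) - 1) t := by
  match n with
  | 0 => simp
  | 1 => norm_num
  | (k+2) =>
    rw [show (((k+2 : ℕ) : ℤ) - 2) = (k : ℤ) by push_cast; ring,
      show (((k+2 : ℕ) : ℤ) - 1) = (k : ℤ) + 1 by push_cast; ring, stepAuxZ]

lemma recAuxZ (x y ν : ℝ) : ∀ n : ℕ, ∀ t > 0,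
    auxZ x y ν ((n : ℤ) + 1) t =
      (x * t ^ 2 + (ν + 1 + 2 * n) * t - y) * auxZ x y ν (n : ℤ) t +
        (2 * n * t * y - n * (n - 1) * t ^ 2 - n * (ν + 1) * t ^ 2) * auxZ x y ν ((n : ℤ) - 1) t -
          n * (n - 1) * t ^ 2 * y * auxZ x y ν ((n : ℤ) - 2) t := by
  intro n
  induction n with
  | zero =>
    intro t ht
    have ht' : (t : ℝ) ≠ 0 := ne_of_gt ht
    have h2 : HasDerivAt (fun s : ℝ => x * s + y / s) (x - y / t ^ 2) t := by
      have ha : HasDerivAt (fun s : ℝ => x * s) x t := by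
        simpa using (hasDerivAt_id t).const_mul x
      have hb : HasDerivAt (fun s : ℝ => y / s) (-(y / t ^ 2)) t := by
        simpa [div_eq_mul_inv] using (hasDerivAt_inv ht').const_mul y
      exact (ha.add hb).congr_deriv (by ring)
    have h1 : HasDerivAt (fun s : ℝ => s ^ (ν + 1)) ((ν + 1) * t ^ ν) t := by
      have := Real.hasDerivAt_rpow_const (p := ν + 1) (Or.inl ht')
      simpa using this
    have hd0 : HasDerivAt (auxD x y ν 0)
        ((ν + 1) * t ^ ν * Real.exp (x * t + y / t)
          + t ^ (ν + 1) * (Real.exp (x * t + y / t) * (x - y / t ^ 2))) t := by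
      exact h1.mul h2.exp
    rw [show ((0 : ℕ) : ℤ) + 1 = ((1 : ℕ) : ℤ) by norm_num, auxZ_coe,
      show (auxD x y ν 1) t = t ^ 2 * deriv (auxD x y ν 0) t from rfl, hd0.deriv,
      show ((0 : ℕ) : ℤ) = ((0 : ℕ) : ℤ) from rfl, auxZ_coe,
      show (((0:ℕ) : ℤ) - 1) = (-1 : ℤ) by norm_num,
      show (((0:ℕ) : ℤ) - 2) = (-2 : ℤ) by norm_num,
      auxZ_neg x y ν (by norm_num : (-1 : ℤ) < 0),
      auxZ_neg x y ν (by norm_num : (-2 : ℤ) < 0)]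
    show t ^ 2 * _ = _ * (t ^ (ν + 1) * Real.exp (x * t + y / t)) + _ - _
    have hr : t ^ (ν + 1) = t ^ ν * t := Real.rpow_add_one ht' ν
    rw [hr]
    push_cast
    field_simp
    ring
  | succ n ih =>
    intro t ht
    have ht' : (t : ℝ) ≠ 0 := ne_of_gt ht
    -- derivatives of the three auxZ pieces
    have hn : HasDerivAt (auxZ x y ν (n : ℤ)) (deriv (auxZ x y ν (n : ℤ)) t) t :=
      (diffAuxZ x y ν _ ht).hasDerivAt
    have hn1 : HasDerivAt (auxZ x y ν ((n : ℤ) - 1)) (deriv (auxZ x y ν ((n : ℤ) - 1)) t) t :=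
      (diffAuxZ x y ν _ ht).hasDerivAt
    have hn2 : HasDerivAt (auxZ x y ν ((n : ℤ) - 2)) (deriv (auxZ x y ν ((n : ℤ) - 2)) t) t :=
      (diffAuxZ x y ν _ ht).hasDerivAt
    have hA : HasDerivAt (fun s : ℝ => x * s ^ 2 + (ν + 1 + 2 * (n : ℝ)) * s - y)
        (x * (2 * t ^ 1) + (ν + 1 + 2 * (n : ℝ)) * 1) t := by
      have h1 := (hasDerivAt_pow 2 t).const_mul x
      have h2 := (hasDerivAt_id t).const_mul (ν + 1 + 2 * (n : ℝ))
      have := (h1.add h2).sub_const y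
      exact this.congr_deriv (by push_cast; ring)
    have hB : HasDerivAt
        (fun s : ℝ => 2 * (n : ℝ) * s * y - (n : ℝ) * ((n : ℝ) - 1) * s ^ 2
          - (n : ℝ) * (ν + 1) * s ^ 2)
        (2 * (n : ℝ) * y - (n : ℝ) * ((n : ℝ) - 1) * (2 * t)
          - (n : ℝ) * (ν + 1) * (2 * t)) t := by
      have h1 := ((hasDerivAt_id t).const_mul (2 * (n : ℝ))).mul_const y
      have h2 := (hasDerivAt_pow 2 t).const_mul ((n : ℝ) * ((n : ℝ) - 1))
      have h3 := (hasDerivAt_pow 2 t).const_mul ((n : ℝ) * (ν + 1))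
      have := (h1.sub h2).sub h3
      exact this.congr_deriv (by push_cast; ring)
    have hC : HasDerivAt (fun s : ℝ => (n : ℝ) * ((n : ℝ) - 1) * s ^ 2 * y)
        ((n : ℝ) * ((n : ℝ) - 1) * (2 * t) * y) t := by
      have := ((hasDerivAt_pow 2 t).const_mul ((n : ℝ) * ((n : ℝ) - 1))).mul_const y
      exact this.congr_deriv (by push_cast; ring)
    have hg : HasDerivAt
        (fun s : ℝ =>
          (x * s ^ 2 + (ν + 1 + 2 * (n : ℝ)) * s - y) * auxZ x y ν (n : ℤ) s +
            (2 * (n : ℝ) * s * y - (n : ℝ) * ((n : ℝ) - 1) * s ^ 2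
              - (n : ℝ) * (ν + 1) * s ^ 2) * auxZ x y ν ((n : ℤ) - 1) s -
              (n : ℝ) * ((n : ℝ) - 1) * s ^ 2 * y * auxZ x y ν ((n : ℤ) - 2) s)
        (((x * (2 * t ^ 1) + (ν + 1 + 2 * (n : ℝ)) * 1) * auxZ x y ν (n : ℤ) t
            + (x * t ^ 2 + (ν + 1 + 2 * (n : ℝ)) * t - y) * deriv (auxZ x y ν (n : ℤ)) t)
          + ((2 * (n : ℝ) * y - (n : ℝ) * ((n : ℝ) - 1) * (2 * t)
              - (n : ℝ) * (ν + 1) * (2 * t)) * auxZ x y ν ((n : ℤ) - 1) t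
            + (2 * (n : ℝ) * t * y - (n : ℝ) * ((n : ℝ) - 1) * t ^ 2
              - (n : ℝ) * (ν + 1) * t ^ 2) * deriv (auxZ x y ν ((n : ℤ) - 1)) t)
          - ((n : ℝ) * ((n : ℝ) - 1) * (2 * t) * y * auxZ x y ν ((n : ℤ) - 2) t
            + (n : ℝ) * ((n : ℝ) - 1) * t ^ 2 * y * deriv (auxZ x y ν ((n : ℤ) - 2)) t)) t :=
      ((hA.mul hn).add (hB.mul hn1)).sub (hC.mul hn2)
    have heq : auxZ x y ν ((n : ℤ) + 1) =ᶠ[nhds t]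
        (fun s : ℝ =>
          (x * s ^ 2 + (ν + 1 + 2 * (n : ℝ)) * s - y) * auxZ x y ν (n : ℤ) s +
            (2 * (n : ℝ) * s * y - (n : ℝ) * ((n : ℝ) - 1) * s ^ 2
              - (n : ℝ) * (ν + 1) * s ^ 2) * auxZ x y ν ((n : ℤ) - 1) s -
              (n : ℝ) * ((n : ℝ) - 1) * s ^ 2 * y * auxZ x y ν ((n : ℤ) - 2) s) := by
      filter_upwards [Ioi_mem_nhds ht] with s hs
      exact ih s hs
    -- rewrite the goal indices
    have hstep : auxZ x y ν (((n+1 : ℕ) : ℤ) + 1) t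
        = t ^ 2 * deriv (auxZ x y ν (((n+1 : ℕ)) : ℤ)) t := stepAuxZ x y ν (n+1) t
    rw [hstep, show (((n+1 : ℕ)) : ℤ) = (n : ℤ) + 1 by push_cast; ring]
    rw [show ((n : ℤ) + 1 - 1) = (n : ℤ) by ring,
      show ((n : ℤ) + 1 - 2) = (n : ℤ) - 1 by ring,
      heq.deriv_eq, hg.deriv]
    have r0 : auxZ x y ν ((n : ℤ) + 1) t = t ^ 2 * deriv (auxZ x y ν (n : ℤ)) t :=
      stepAuxZ x y ν n t
    have r1 := padded1 x y ν n t
    have r2 := padded2 x y ν n t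
    have rIH := ih t ht
    push_cast
    linear_combination (-(x * t ^ 2 + (ν + 1 + 2 * (n:ℝ)) * t - y)) * r0
      + (2 * t * y - ((n:ℝ) - 1) * t ^ 2 - (ν + 1) * t ^ 2) * r1
      - t ^ 2 * y * r2 - 2 * t * rIH

open Real

/-- the four-term recurrence satisfied by `Dₙ(t) = (t² d/dt)ⁿ D₀(t)`,
with `D₀(t) = t^(ν+1) e^(x t + y/t)` and `D₋₁ = D₋₂ = 0`. -/
theorem stmt_1 (x y ν : ℝ) (D : ℤ → ℝ → ℝ)
    (hD0 : ∀ t > 0, D 0 t = t ^ (ν + 1) * Real.exp (x * t + y / t))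
    (hrec : ∀ n : ℤ, 1 ≤ n → ∀ t > 0, D n t = t ^ 2 * deriv (D (n - 1)) t)
    (hm1 : D (-1) = 0) (hm2 : D (-2) = 0) :
    ∀ n : ℕ, ∀ t > 0,
      D ((n : ℤ) + 1) t =
        (x * t ^ 2 + (ν + 1 + 2 * n) * t - y) * D n t +
          (2 * n * t * y - n * (n - 1) * t ^ 2 - n * (ν + 1) * t ^ 2) * D ((n : ℤ) - 1) t -
            n * (n - 1) * t ^ 2 * y * D ((n : ℤ) - 2) t := by
  have key : ∀ m : ℕ, ∀ t > 0, D (m : ℤ) t = auxD x y ν m t := by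
    intro m
    induction m with
    | zero =>
      intro t ht
      rw [show ((0 : ℕ) : ℤ) = (0 : ℤ) from rfl, hD0 t ht]
      rfl
    | succ k ih =>
      intro t ht
      have h1 : D ((k : ℤ) + 1) t = t ^ 2 * deriv (D (k : ℤ)) t := by
        have := hrec ((k : ℤ) + 1) (by omega) t ht
        simpa using this
      have h2 : deriv (D (k : ℤ)) t = deriv (auxD x y ν k) t := by
        apply Filter.EventuallyEq.deriv_eq
        filter_upwards [Ioi_mem_nhds ht] with s hs
        exact ih s hs
      rw [show ((k+1 : ℕ) : ℤ) = (k : ℤ) + 1 by push_cast; ring, h1, h2]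
      rfl
  have keyZ : ∀ m : ℤ, -2 ≤ m → ∀ t > 0, D m t = auxZ x y ν m t := by
    intro m hm t ht
    rcases le_or_gt 0 m with h | h
    · obtain ⟨k, rfl⟩ := Int.eq_ofNat_of_zero_le h
      rw [auxZ_coe]
      exact key k t ht
    · rw [auxZ_neg x y ν h]
      interval_cases m
      · rw [hm2]
      · rw [hm1]
  intro n t ht
  rw [keyZ ((n : ℤ) + 1) (by omega) t ht, keyZ (n : ℤ) (by omega) t ht,
    keyZ ((n : ℤ) - 1) (by omega) t ht, keyZ ((n : ℤ) - 2) (by omega) t ht]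
  exact recAuxZ x y ν n t ht
end

section
/- Define Q_n(x,y,ν) = 𝒟_n(x,y,ν,1)/n!, where 𝒟_n is generated by 𝒟_n = t² d/dt 𝒟_{n-1} with 𝒟_0(t) = t^{ν+1} e^{x t + y/t}. Then Q_0 = e^{x+y}, Q_1 = (x + ν + 1 − y) e^{x+y}, and for n ≥ 1 (with Q_{-1} = 0): (n+1) Q_{n+1} = (x + ν + 1 + 2n − y) Q_n + (2y − ν − n) Q_{n-1} − y Q_{n-2}. -/
open Real

open Polynomial in
noncomputable def Apoly (x y ν : ℝ) : Polynomial ℝ := C x * X^2 + C (ν+1) * X - C y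

open Polynomial in
noncomputable def pp (x y ν : ℝ) : ℕ → Polynomial ℝ
  | 0 => 1
  | n+1 => X^2 * derivative (pp x y ν n) + Apoly x y ν * pp x y ν n

open Polynomial

lemma pp_step (x y ν : ℝ) (k : ℕ) :
    X^2 * derivative (pp x y ν k) = pp x y ν (k+1) - Apoly x y ν * pp x y ν k := by
  simp [pp]

lemma Erec (x y ν : ℝ) : ∀ n : ℕ,
    pp x y ν (n+2) = (Apoly x y ν + C (2*((n:ℝ)+1)) * X) * pp x y ν (n+1)
      + C ((n:ℝ)+1) * (C (2*y) * X - C (ν+((n:ℝ)+1)) * X^2) * pp x y ν n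
      - C (((n:ℝ)+1)*(n:ℝ)*y) * X^2 * pp x y ν (n-1) := by
  intro n
  induction n with
  | zero =>
    simp [pp, Apoly, derivative_mul, map_ofNat]
    ring
  | succ m ih =>
    cases m with
    | zero =>
      simp [pp, Apoly, derivative_mul, derivative_add, derivative_sub, map_ofNat]
      ring
    | succ k =>
      have h1 : pp x y ν (k+4) = X^2 * derivative (pp x y ν (k+3))
          + Apoly x y ν * pp x y ν (k+3) := by simp [pp]
      have h2 := congrArg derivative ih
      have hq2 := pp_step x y ν (k+2)
      have hq1 := pp_step x y ν (k+1)
      have hq0 := pp_step x y ν k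
      simp only [derivative_add, derivative_sub, derivative_mul, derivative_C, derivative_X,
        derivative_X_pow, derivative_one, derivative_ofNat, Apoly, zero_mul, mul_zero, zero_add, add_zero,
        sub_zero, zero_sub, Nat.cast_add, Nat.cast_one, Nat.cast_ofNat,
        map_add, map_mul, map_sub, map_one, map_ofNat] at h1 h2 hq0 hq1 hq2 ih ⊢
      push_cast at h1 h2 hq0 hq1 hq2 ih ⊢
      linear_combination h1 + X^2 * h2
        + ((C x * X^2 + (C ν + 1) * X - C y) + 2*(C (k:ℝ)+2) * X) * hq2
        + ((C (k:ℝ)+2) * (2*C y * X - (C ν + C (k:ℝ) + 2) * X^2)) * hq1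
        + (- (C (k:ℝ)+2)*(C (k:ℝ)+1)*C y * X^2) * hq0
        + ((C x * X^2 + (C ν + 1) * X - C y) - 2*X) * ih

lemma base_hasDeriv (x y ν t : ℝ) (ht : 0 < t) (q : Polynomial ℝ) :
    HasDerivAt (fun s : ℝ => s ^ (ν+1) * Real.exp (x*s + y/s) * q.eval s)
      ((ν+1) * t^ν * Real.exp (x*t+y/t) * q.eval t
        + t^(ν+1) * ((x - y/t^2) * Real.exp (x*t+y/t)) * q.eval t
        + t^(ν+1) * Real.exp (x*t+y/t) * q.derivative.eval t) t := by
  have ht0 : t ≠ 0 := ne_of_gt ht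
  have h1 : HasDerivAt (fun s : ℝ => s ^ (ν+1)) ((ν+1) * t^ν) t := by
    have := Real.hasDerivAt_rpow_const (x := t) (p := ν+1) (Or.inl ht0)
    simpa using this
  have h2 : HasDerivAt (fun s : ℝ => Real.exp (x*s + y/s))
      ((x - y/t^2) * Real.exp (x*t+y/t)) t := by
    have hu : HasDerivAt (fun s : ℝ => x*s + y/s) (x - y/t^2) t := by
      have ha : HasDerivAt (fun s : ℝ => x*s) x t := by
        simpa using (hasDerivAt_id t).const_mul x
      have hb : HasDerivAt (fun s : ℝ => y/s) (y * (-(t^2)⁻¹)) t := by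
        simpa [div_eq_mul_inv] using (hasDerivAt_inv ht0).const_mul y
      have := ha.add hb
      refine this.congr_deriv ?_
      field_simp
      ring
    have := hu.exp
    simpa [mul_comm] using this
  have h3 : HasDerivAt (fun s : ℝ => q.eval s) (q.derivative.eval t) t := q.hasDerivAt t
  have := ((h1.mul h2).mul h3)
  refine this.congr_deriv ?_
  simp only [Pi.mul_apply]
  ring

lemma Dform (x y ν : ℝ) (D : ℕ → ℝ → ℝ)
    (hD0 : ∀ t > 0, D 0 t = t ^ (ν + 1) * Real.exp (x * t + y / t))
    (hrec : ∀ n : ℕ, D (n + 1) = fun t => t ^ 2 * deriv (D n) t) :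
    ∀ n : ℕ, ∀ t > 0, D n t = t ^ (ν+1) * Real.exp (x*t + y/t) * (pp x y ν n).eval t := by
  intro n
  induction n with
  | zero => intro t ht; simp [pp, hD0 t ht]
  | succ n ih =>
    intro t ht
    have ht0 : t ≠ 0 := ne_of_gt ht
    have hev : D n =ᶠ[nhds t]
        (fun s => s ^ (ν+1) * Real.exp (x*s + y/s) * (pp x y ν n).eval s) := by
      filter_upwards [Ioi_mem_nhds ht] with s hs
      exact ih s hs
    have hder := (base_hasDeriv x y ν t ht (pp x y ν n))
    have : deriv (D n) t = _ := hev.deriv_eq.trans hder.deriv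
    rw [hrec n]
    simp only [this]
    have hpow : t ^ (ν+1) = t ^ ν * t := Real.rpow_add_one ht0 ν
    simp only [pp, eval_add, eval_mul, eval_pow, eval_X, Apoly, eval_sub, eval_C, hpow]
    field_simp
    ring

/-- `Qₙ = Dₙ(1)/n!` satisfies `Q₀ = e^(x+y)`, `Q₁ = (x+ν+1−y) e^(x+y)` and the
four-term recurrence `(n+1) Qₙ₊₁ = (x+ν+1+2n−y) Qₙ + (2y−ν−n) Qₙ₋₁ − y Qₙ₋₂` for `n ≥ 1`,
with `Q₋₁ = 0`. -/
theorem stmt_3 (x y ν : ℝ) (D : ℕ → ℝ → ℝ) (Q : ℤ → ℝ)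
    (hD0 : ∀ t > 0, D 0 t = t ^ (ν + 1) * Real.exp (x * t + y / t))
    (hrec : ∀ n : ℕ, D (n + 1) = fun t => t ^ 2 * deriv (D n) t)
    (hQ : ∀ n : ℕ, Q n = D n 1 / (n.factorial : ℝ))
    (hQm1 : Q (-1) = 0) :
    Q 0 = Real.exp (x + y) ∧
    Q 1 = (x + ν + 1 - y) * Real.exp (x + y) ∧
    ∀ n : ℕ, 1 ≤ n →
      ((n : ℝ) + 1) * Q ((n : ℤ) + 1) =
        (x + ν + 1 + 2 * n - y) * Q n + (2 * y - ν - n) * Q ((n : ℤ) - 1) - y * Q ((n : ℤ) - 2) := by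
  have hDf := Dform x y ν D hD0 hrec
  have hD1 : ∀ k : ℕ, D k 1 = Real.exp (x+y) * (pp x y ν k).eval 1 := by
    intro k
    have := hDf k 1 one_pos
    simpa using this
  have hQz : ∀ k : ℕ, Q (k:ℤ) = Real.exp (x+y) * (pp x y ν k).eval 1 / (k.factorial:ℝ) := by
    intro k
    rw [hQ k, hD1 k]
  refine ⟨?_, ?_, ?_⟩
  · have := hQz 0
    simpa [pp] using this
  · have := hQz 1
    simp [pp, Apoly] at this
    rw [this]; ring
  · intro n hn
    obtain ⟨m, rfl⟩ : ∃ m, n = m + 1 := ⟨n-1, (Nat.succ_pred_eq_of_pos hn).symm⟩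
    have e2 := congrArg (Polynomial.eval (1:ℝ)) (Erec x y ν m)
    simp only [eval_add, eval_sub, eval_mul, eval_pow, eval_X, eval_C, Apoly,
      one_pow, mul_one] at e2
    have c1 : ((m+1:ℕ):ℤ) + 1 = ((m+2:ℕ):ℤ) := by push_cast; ring
    have c2 : ((m+1:ℕ):ℤ) - 1 = ((m:ℕ):ℤ) := by push_cast; ring
    rw [c1, c2, hQz, hQz, hQz]
    cases m with
    | zero =>
      have c3 : (((0+1:ℕ):ℤ)) - 2 = -1 := by norm_num
      rw [c3, hQm1]
      norm_num [Nat.factorial] at e2 ⊢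
      linear_combination Real.exp (x+y) * e2
    | succ j =>
      have c3 : (((j+1+1:ℕ):ℤ)) - 2 = ((j:ℕ):ℤ) := by push_cast; ring
      rw [c3, hQz]
      have hf0 : ((j.factorial : ℝ)) ≠ 0 := Nat.cast_ne_zero.mpr j.factorial_ne_zero
      have hj1 : ((j:ℝ)+1) ≠ 0 := by positivity
      have hj2 : ((j:ℝ)+2) ≠ 0 := by positivity
      have hj3 : ((j:ℝ)+3) ≠ 0 := by positivity
      have f1 : (((j+1).factorial : ℝ)) = ((j:ℝ)+1) * (j.factorial : ℝ) := by
        rw [Nat.factorial_succ]; push_cast; ring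
      have f2 : (((j+2).factorial : ℝ)) = ((j:ℝ)+2) * (((j+1).factorial : ℝ)) := by
        rw [show j+2 = (j+1)+1 from rfl, Nat.factorial_succ]; push_cast; ring
      have f3 : (((j+3).factorial : ℝ)) = ((j:ℝ)+3) * (((j+2).factorial : ℝ)) := by
        rw [show j+3 = (j+2)+1 from rfl, Nat.factorial_succ]; push_cast; ring
      have hf2 : (((j+2).factorial : ℝ)) ≠ 0 := by
        rw [f2, f1]; exact mul_ne_zero hj2 (mul_ne_zero hj1 hf0)
      have L1 : ((j:ℝ)+1+1+1) * (Real.exp (x+y) * (pp x y ν (j+1+1+1)).eval 1 / (((j+1+1+1).factorial : ℝ)))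
          = Real.exp (x+y) * (pp x y ν (j+3)).eval 1 / (((j+2).factorial : ℝ)) := by
        rw [show j+1+1+1 = j+3 from rfl, f3]
        field_simp
        ring
      have L2 : Real.exp (x+y) * (pp x y ν (j+1)).eval 1 / (((j+1).factorial : ℝ))
          = ((j:ℝ)+2) * (Real.exp (x+y) * (pp x y ν (j+1)).eval 1) / (((j+2).factorial : ℝ)) := by
        rw [f2]
        field_simp
      have L3 : Real.exp (x+y) * (pp x y ν j).eval 1 / ((j.factorial : ℝ))
          = ((j:ℝ)+2) * ((j:ℝ)+1) * (Real.exp (x+y) * (pp x y ν j).eval 1) / (((j+2).factorial : ℝ)) := by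
        rw [f2, f1]
        field_simp
      push_cast at e2 ⊢
      rw [show ((j:ℝ)+1+1+1) = (j:ℝ)+3 from by ring] at *
      push_cast at L1 L2 L3
      rw [L1, L2, L3] at *
      push_cast at *
      linear_combination ((((j+2).factorial : ℝ)))⁻¹ * Real.exp (x+y) * e2
end
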